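/- Let ν be a positive integer coprime to p and suppose ν·w = (p^k - 1)·ℓ = (p^{k'} - 1)·ℓ' where ℓ < p^k, ℓ' < p^{k'}, and p does not divide w. Then k = k' and ℓ = ℓ'. -/

import Mathlib

/-- gcd(p^k - 1, p^k' - 1) divides p^(gcd k k') - 1. -/
lemma gcd_pow_sub_one_dvd (p k k' : ℕ) (hp : 2 ≤ p) :
    Nat.gcd (p ^ k - 1) (p ^ k' - 1) ∣ p ^ Nat.gcd k k' - 1 := by
  set m := Nat.gcd (p ^ k - 1) (p ^ k' - 1) with hm
  have key : ∀ n : ℕ, m ∣ p ^ n - 1 → ((p : ZMod m)) ^ n = 1 := by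
    intro n hdvd
    have h1 : 1 ≤ p ^ n := Nat.one_le_pow _ _ (by omega)
    have : ((p ^ n - 1 : ℕ) : ZMod m) = 0 := (ZMod.natCast_eq_zero_iff _ _).2 hdvd
    rw [Nat.cast_sub h1] at this
    push_cast at this ⊢
    linear_combination this
  have hk1 : ((p : ZMod m)) ^ k = 1 := key k (Nat.gcd_dvd_left _ _)
  have hk2 : ((p : ZMod m)) ^ k' = 1 := key k' (Nat.gcd_dvd_right _ _)
  have hg : ((p : ZMod m)) ^ Nat.gcd k k' = 1 := pow_gcd_eq_one.2 ⟨hk1, hk2⟩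
  have h1 : 1 ≤ p ^ Nat.gcd k k' := Nat.one_le_pow _ _ (by omega)
  have : ((p ^ Nat.gcd k k' - 1 : ℕ) : ZMod m) = 0 := by
    rw [Nat.cast_sub h1]
    push_cast
    linear_combination hg
  exact (ZMod.natCast_eq_zero_iff _ _).1 this

lemma no_lt (p k k' ℓ ℓ' : ℕ) (hp : 2 ≤ p) (hk : 0 < k) (hℓ0 : 0 < ℓ) (hkk : k < k')
    (hℓlt : ℓ < p ^ k) (h : (p ^ k - 1) * ℓ = (p ^ k' - 1) * ℓ') : False := by
  set g := Nat.gcd k k' with hgdef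
  have hg0 : 0 < g := Nat.gcd_pos_of_pos_left _ hk
  have hgk : g ∣ k := Nat.gcd_dvd_left _ _
  have hgk' : g ∣ k' := Nat.gcd_dvd_right _ _
  have hgle : g ≤ k := Nat.le_of_dvd hk hgk
  have hgdiff : g ∣ k' - k := Nat.dvd_sub hgk' hgk
  have hgd : g ≤ k' - k := Nat.le_of_dvd (by omega) hgdiff
  -- p^k - 1, p^k' - 1 positive
  have hpk1 : 1 ≤ p ^ k := Nat.one_le_pow _ _ (by omega)
  have hpk'1 : 1 < p ^ k' := Nat.one_lt_pow (by omega) (by omega)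
  have hpg1 : 1 < p ^ g := Nat.one_lt_pow (by omega) (by omega)
  set m := Nat.gcd (p ^ k - 1) (p ^ k' - 1) with hm
  have hm0 : 0 < m := Nat.gcd_pos_of_pos_right _ (by omega)
  have hmle : m ≤ p ^ g - 1 :=
    Nat.le_of_dvd (by omega) (gcd_pow_sub_one_dvd p k k' hp)
  -- b := (p^k'-1)/m divides ℓ
  have hma : m ∣ p ^ k - 1 := Nat.gcd_dvd_left _ _
  have hmb : m ∣ p ^ k' - 1 := Nat.gcd_dvd_right _ _
  obtain ⟨a, ha⟩ := hma
  obtain ⟨b, hb⟩ := hmb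
  have hcop : Nat.Coprime a b := by
    have := Nat.coprime_div_gcd_div_gcd (m := p ^ k - 1) (n := p ^ k' - 1) hm0
    rwa [← hm, ha, hb, Nat.mul_div_cancel_left _ hm0, Nat.mul_div_cancel_left _ hm0] at this
  have hbdvd : b ∣ ℓ := by
    have hdvd : m * b ∣ m * (a * ℓ) := by
      rw [← hb, ← mul_assoc, ← ha, h]
      exact dvd_mul_right _ _
    have : b ∣ a * ℓ := (mul_dvd_mul_iff_left (by omega : m ≠ 0)).1 hdvd
    exact (Nat.Coprime.dvd_of_dvd_mul_left hcop.symm this)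
  -- b ≥ p^(k'-g) ≥ p^k
  have hb0 : 0 < b := by
    rcases Nat.eq_zero_or_pos b with h0 | h0
    · rw [h0, mul_zero] at hb; omega
    · exact h0
  have hblow : p ^ (k' - g) ≤ b := by
    have h1 : (p ^ g - 1) * p ^ (k' - g) ≤ p ^ k' - 1 := by
      have : p ^ g * p ^ (k' - g) = p ^ k' := by
        rw [← pow_add]; congr 1; omega
      have hpow : 1 ≤ p ^ (k' - g) := Nat.one_le_pow _ _ (by omega)
      calc (p ^ g - 1) * p ^ (k' - g) = p ^ g * p ^ (k' - g) - p ^ (k' - g) := by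
            rw [Nat.sub_mul, one_mul]
        _ ≤ p ^ k' - 1 := by rw [this]; omega
    have h2 : p ^ k' - 1 = m * b := hb
    have h3 : m * b ≤ (p ^ g - 1) * b := Nat.mul_le_mul_right _ hmle
    have h4 : (p ^ g - 1) * p ^ (k' - g) ≤ (p ^ g - 1) * b := by
      calc (p ^ g - 1) * p ^ (k' - g) ≤ p ^ k' - 1 := h1
        _ = m * b := h2
        _ ≤ (p ^ g - 1) * b := h3
    exact Nat.le_of_mul_le_mul_left h4 (by omega : 0 < p ^ g - 1)
  have hpkle : p ^ k ≤ p ^ (k' - g) := Nat.pow_le_pow_right (by omega) (by omega)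
  have : p ^ k ≤ ℓ := le_trans (le_trans hpkle hblow) (Nat.le_of_dvd hℓ0 hbdvd)
  omega

theorem minimal_factorization_determined (p : ℕ) (hp : p.Prime)
    (ν w k ℓ k' ℓ' : ℕ) (hν : 0 < ν) (hco : Nat.Coprime ν p)
    (hw : 0 < w) (hk : 0 < k) (hℓ : 0 < ℓ) (hk' : 0 < k') (hℓ' : 0 < ℓ')
    (hℓlt : ℓ < p ^ k) (hℓ'lt : ℓ' < p ^ k')
    (hpw : ¬ p ∣ w)
    (h1 : ν * w = (p ^ k - 1) * ℓ) (h2 : ν * w = (p ^ k' - 1) * ℓ') :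
    k = k' ∧ ℓ = ℓ' := by
  have hp2 : 2 ≤ p := hp.two_le
  have h : (p ^ k - 1) * ℓ = (p ^ k' - 1) * ℓ' := by rw [← h1, h2]
  have hkk : k = k' := by
    rcases lt_trichotomy k k' with hlt | heq | hgt
    · exact absurd (no_lt p k k' ℓ ℓ' hp2 hk hℓ hlt hℓlt h) (by simp)
    · exact heq
    · exact absurd (no_lt p k' k ℓ' ℓ hp2 hk' hℓ' hgt hℓ'lt h.symm) (by simp)
  subst hkk
  refine ⟨rfl, ?_⟩
  have hpos : 0 < p ^ k - 1 := by
    have : 1 < p ^ k := Nat.one_lt_pow (by omega) (by omega)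
    omega
  exact Nat.eq_of_mul_eq_mul_left hpos h
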